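/- For all d ≥ 1 and n ≥ 3, the dimension of the full cyclic transversal polytope CTP[d,n] equals n·(2^d − 1), i.e., the finrank of the direction of the affine span of CTP[d,n] in ℝ^{B(d,n)} is n·(2^d − 1). -/
import Mathlib


open scoped Classical

/-- The field `𝔽₂^d`, represented as functions `Fin d → ZMod 2`. -/
abbrev F2 (d : ℕ) : Type := Fin d → ZMod 2

/-- A cyclic transversal of a block configuration `B`. -/
def IsCyclicTransversal {d n : ℕ} (B : Fin n → Set (F2 d)) (ξ : Fin n → F2 d) : Prop :=
  (∀ i, ξ i ∈ B i) ∧ (∑ i, ξ i) = 0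

/-- The incidence vector of a transversal. -/
noncomputable def incVec {d n : ℕ} (ξ : Fin n → F2 d) : Fin n → F2 d → ℝ :=
  fun i ω => if ξ i = ω then 1 else 0

/-- The cyclic transversal polytope of a block configuration. -/
noncomputable def CTP {d n : ℕ} (B : Fin n → Set (F2 d)) : Set (Fin n → F2 d → ℝ) :=
  convexHull ℝ (incVec '' { ξ | IsCyclicTransversal B ξ })

/-- The transversal polytope of a block configuration. -/
def TP {d n : ℕ} (B : Fin n → Set (F2 d)) : Set (Fin n → F2 d → ℝ) :=
  { x | (∀ i ω, 0 ≤ x i ω) ∧ (∀ i ω, ω ∉ B i → x i ω = 0) ∧ ∀ i, (∑ ω : F2 d, x i ω) = 1 }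

/-- The size of a block configuration. -/
noncomputable def blockSize {d n : ℕ} (B : Fin n → Set (F2 d)) : ℕ := ∑ i, (B i).ncard

/-- The rank of a block configuration. -/
noncomputable def blockRank {d n : ℕ} (B : Fin n → Set (F2 d)) : ℕ :=
  Module.finrank (ZMod 2) (Submodule.span (ZMod 2) (⋃ i, B i))

/-- Two sets of real vectors are affinely isomorphic. -/
def AffIso {α β : Type*} [AddCommGroup α] [Module ℝ α] [AddCommGroup β] [Module ℝ β]
    (P : Set α) (Q : Set β) : Prop :=
  ∃ f : α →ᵃ[ℝ] β, Set.InjOn f P ∧ f '' P = Q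

/-- The left-hand side of the lifted odd-set (LOS) inequality associated with `η` and `I`. -/
noncomputable def losLHS {d n : ℕ} (B : Fin n → Set (F2 d)) (η : F2 d) (I : Finset (Fin n))
    (x : Fin n → F2 d → ℝ) : ℝ :=
  (∑ i ∈ I, ∑ ω ∈ Finset.univ.filter (fun ω : F2 d => ω ∈ B i ∧ (∑ j, η j * ω j) = 0), x i ω) +
  (∑ i ∈ Iᶜ, ∑ ω ∈ Finset.univ.filter (fun ω : F2 d => ω ∈ B i ∧ (∑ j, η j * ω j) = 1), x i ω)

/-- Row-sum linear map. -/
noncomputable def rowSum (d n : ℕ) : (Fin n → F2 d → ℝ) →ₗ[ℝ] (Fin n → ℝ) where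
  toFun x := fun i => ∑ ω, x i ω
  map_add' x y := by funext i; simp [Finset.sum_add_distrib]
  map_smul' c x := by funext i; simp [Finset.mul_sum]

/-- basic spanning vectors -/
noncomputable def uvec {d n : ℕ} (i : Fin n) (ω : F2 d) : Fin n → F2 d → ℝ :=
  fun a b => (if a = i ∧ ω = b then (1:ℝ) else 0) - (if a = i ∧ (0 : F2 d) = b then 1 else 0)

noncomputable def pairXi {d n : ℕ} (i j : Fin n) (ω : F2 d) : Fin n → F2 d :=
  fun k => (if k = i then ω else 0) + (if k = j then ω else 0)

lemma pairXi_cyclic {d n : ℕ} (i j : Fin n) (ω : F2 d) :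
    IsCyclicTransversal (fun _ : Fin n => (Set.univ : Set (F2 d))) (pairXi i j ω) := by
  refine ⟨fun _ => trivial, ?_⟩
  have : ∀ t, ω t + ω t = 0 := fun t => CharTwo.add_self_eq_zero (ω t)
  simp [pairXi, Finset.sum_add_distrib, Finset.sum_ite_eq']
  funext t; exact this t

lemma pair_diff {d n : ℕ} {i j : Fin n} (hij : i ≠ j) (ω : F2 d) :
    incVec (pairXi i j ω) - incVec (fun _ : Fin n => (0 : F2 d)) = uvec i ω + uvec j ω := by
  funext a b
  by_cases hai : a = i
  · subst hai
    simp [incVec, pairXi, uvec, hij, Ne.symm hij, eq_comm]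
  · by_cases haj : a = j
    · subst haj
      simp [incVec, pairXi, uvec, hai, Ne.symm hij, eq_comm]
    · simp [incVec, pairXi, uvec, hai, haj]

example : True := trivial

section main
variable {d n : ℕ}

noncomputable abbrev fullS (d n : ℕ) : Set (Fin n → F2 d → ℝ) :=
  incVec '' { ξ | IsCyclicTransversal (fun _ : Fin n => (Set.univ : Set (F2 d))) ξ }

lemma zero_mem_fullS : incVec (fun _ : Fin n => (0 : F2 d)) ∈ fullS d n :=
  Set.mem_image_of_mem _ ⟨fun _ => trivial, by simp⟩

lemma pair_mem_fullS (i j : Fin n) (ω : F2 d) : incVec (pairXi i j ω) ∈ fullS d n :=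
  Set.mem_image_of_mem _ (pairXi_cyclic i j ω)

lemma uvec_mem (hn : 3 ≤ n) (i : Fin n) (ω : F2 d) :
    uvec i ω ∈ vectorSpan ℝ (fullS d n) := by
  have hcard : 1 < (Finset.univ.erase i).card := by
    rw [Finset.card_erase_of_mem (Finset.mem_univ i), Finset.card_univ, Fintype.card_fin]
    omega
  obtain ⟨j, hj, k, hk, hjk⟩ := Finset.one_lt_card.mp hcard
  have hji : j ≠ i := Finset.ne_of_mem_erase hj
  have hki : k ≠ i := Finset.ne_of_mem_erase hk
  have hD : ∀ p q : Fin n, p ≠ q →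
      uvec p ω + uvec q ω ∈ vectorSpan ℝ (fullS d n) := by
    intro p q hpq
    rw [← pair_diff hpq ω]
    have := vsub_mem_vectorSpan ℝ (pair_mem_fullS p q ω) (zero_mem_fullS)
    simpa [vsub_eq_sub] using this
  have key : uvec i ω = (2⁻¹ : ℝ) •
      ((uvec i ω + uvec j ω) + (uvec i ω + uvec k ω) - (uvec j ω + uvec k ω)) := by
    module
  rw [key]
  exact Submodule.smul_mem _ _ (Submodule.sub_mem _
    (Submodule.add_mem _ (hD i j (Ne.symm hji)) (hD i k (Ne.symm hki))) (hD j k hjk))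

lemma vectorSpan_le_ker :
    vectorSpan ℝ (fullS d n) ≤ LinearMap.ker (rowSum d n) := by
  rw [vectorSpan_def, Submodule.span_le]
  rintro g ⟨x, hx, y, hy, rfl⟩
  obtain ⟨ξ, -, rfl⟩ := hx
  obtain ⟨ζ, -, rfl⟩ := hy
  simp only [SetLike.mem_coe, LinearMap.mem_ker]
  funext i
  simp [rowSum, incVec, vsub_eq_sub, Finset.sum_sub_distrib, Finset.sum_ite_eq]

lemma ker_le_vectorSpan (hn : 3 ≤ n) :
    LinearMap.ker (rowSum d n) ≤ vectorSpan ℝ (fullS d n) := by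
  intro x hx
  have hx0 : ∀ a : Fin n, ∑ ω, x a ω = 0 := by
    intro a
    have := LinearMap.mem_ker.mp hx
    exact congrFun this a
  have hdecomp : x = ∑ i, ∑ ω, x i ω • uvec i ω := by
    funext a b
    have expand : (∑ i, ∑ ω, x i ω • uvec i ω) a b =
        ∑ i : Fin n, ∑ ω : F2 d, ((if a = i ∧ ω = b then x i ω else 0)
          - (if a = i ∧ (0 : F2 d) = b then x i ω else 0)) := by
      simp [Finset.sum_apply, uvec, mul_sub, mul_ite]
    have hA : (∑ i : Fin n, ∑ ω : F2 d, if a = i ∧ ω = b then x i ω else 0) = x a b := by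
      rw [Finset.sum_eq_single a]
      · simp
      · intro c _ hc; simp [Ne.symm hc]
      · simp
    have hB : (∑ i : Fin n, ∑ ω : F2 d, if a = i ∧ (0 : F2 d) = b then x i ω else 0) = 0 := by
      by_cases hb : (0 : F2 d) = b
      · rw [Finset.sum_eq_single a]
        · simpa [hb] using hx0 a
        · intro c _ hc; simp [Ne.symm hc]
        · simp
      · simp [hb]
    rw [expand]
    simp only [Finset.sum_sub_distrib]
    rw [hA, hB, sub_zero]
  rw [hdecomp]
  exact Submodule.sum_mem _ fun i _ => Submodule.sum_mem _ fun ω _ =>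
    Submodule.smul_mem _ _ (uvec_mem hn i ω)

lemma rowSum_surjective : Function.Surjective (rowSum d n) := by
  intro c
  refine ⟨fun i ω => if ω = 0 then c i else 0, ?_⟩
  funext i
  simp [rowSum, Finset.sum_ite_eq']

end main


/-- the dimension of the full CTP equals `n (2^d - 1)`. -/
theorem statement7 (d n : ℕ) (hd : 1 ≤ d) (hn : 3 ≤ n) :
    Module.finrank ℝ
        (affineSpan ℝ (CTP (fun _ : Fin n => (Set.univ : Set (F2 d))))).direction
      = n * (2 ^ d - 1) := by
  rw [CTP, affineSpan_convexHull, direction_affineSpan]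
  have hspan : vectorSpan ℝ (fullS d n) = LinearMap.ker (rowSum d n) :=
    le_antisymm vectorSpan_le_ker (ker_le_vectorSpan hn)
  rw [hspan]
  have hrk := LinearMap.finrank_range_add_finrank_ker (rowSum d n)
  have hrange : LinearMap.range (rowSum d n) = ⊤ :=
    LinearMap.range_eq_top.mpr rowSum_surjective
  rw [hrange] at hrk
  have htop : Module.finrank ℝ (⊤ : Submodule ℝ (Fin n → ℝ)) = n := by
    rw [finrank_top, Module.finrank_pi, Fintype.card_fin]
  have hdom : Module.finrank ℝ (Fin n → F2 d → ℝ) = n * 2 ^ d := by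
    rw [Module.finrank_pi_fintype]
    simp [Module.finrank_pi]
  rw [htop, hdom] at hrk
  have hpow : 1 ≤ 2 ^ d := Nat.one_le_two_pow
  have key : n * (2 ^ d - 1) + n = n * 2 ^ d := by
    rw [← Nat.mul_succ]
    congr 1
    omega
  omega
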